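/- Let Y₁, ..., Y_N be i.i.d. nonnegative random variables with E[Y] = 1, and suppose E[Y^{1+θ}] < ∞ for some θ ∈ (0,1]. Then for all δ > 0 and all L ∈ ℝ with ln N ≥ L, writing t = ln N − L, the deviation probability satisfies P(|N^{-1} ∑ Yᵢ − 1| ≥ δ) ≤ (1/δ) e^{−t/4} + (2/δ) √(P_{η}(ln Y > L + t/2)), where P_η denotes the size-biased law of Y (i.e. the law with density Y with respect to the original law). -/

import Mathlib

open MeasureTheory

/-- Chatterjee–Diaconis deviation bound: for i.i.d. nonnegative `Y₁, …, Y_N` with mean `1`,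
`E[Y^{1+θ}] < ∞` for some `θ ∈ (0,1]`, `δ > 0` and `L ≤ ln N` with `t = ln N - L`,
`P(|N⁻¹ ∑ Yᵢ - 1| ≥ δ) ≤ δ⁻¹ e^{-t/4} + 2 δ⁻¹ √(E[Y 1_{ln Y > L + t/2}])`,
where `E[Y 1_{ln Y > a}]` is the size-biased probability of `{ln Y > a}`. -/
theorem sample_size_deviation_bound {Ω : Type*} [MeasurableSpace Ω]
    (P : Measure Ω) [IsProbabilityMeasure P] (Y : ℕ → Ω → ℝ)
    (hmeas : ∀ i, Measurable (Y i)) (hnn : ∀ i ω, 0 ≤ Y i ω)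
    (hindep : ProbabilityTheory.iIndepFun Y P)
    (hident : ∀ i, P.map (Y i) = P.map (Y 0))
    (hint : Integrable (Y 0) P) (hmean : ∫ ω, Y 0 ω ∂P = 1)
    (θ : ℝ) (hθ0 : 0 < θ) (hθ1 : θ ≤ 1)
    (hmom : Integrable (fun ω => (Y 0 ω) ^ (1 + θ)) P)
    (N : ℕ) (hN : 0 < N) (δ : ℝ) (hδ : 0 < δ) (L : ℝ) (hL : L ≤ Real.log N) :
    (P {ω | δ ≤ |(N : ℝ)⁻¹ * ∑ i ∈ Finset.range N, Y i ω - 1|}).toReal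
      ≤ (1 / δ) * Real.exp (-(Real.log N - L) / 4)
        + (2 / δ) * Real.sqrt
            (∫ ω in {ω | L + (Real.log N - L) / 2 < Real.log (Y 0 ω)}, Y 0 ω ∂P) := by
  classical
  set t : ℝ := Real.log N - L with ht_def
  have ht : 0 ≤ t := sub_nonneg.2 hL
  set c : ℝ := Real.exp (L + t / 2) with hc_def
  have hc : 0 < c := Real.exp_pos _
  set φ : ℝ → ℝ := fun x => if x ≤ c then x else 0 with hφ_def
  set ψ : ℝ → ℝ := fun x => if x ≤ c then 0 else x with hψ_def
  have hφm : Measurable φ :=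
    Measurable.ite (measurableSet_le measurable_id measurable_const) measurable_id
      measurable_const
  have hψm : Measurable ψ :=
    Measurable.ite (measurableSet_le measurable_id measurable_const) measurable_const
      measurable_id
  have hφ0 : ∀ x, 0 ≤ x → 0 ≤ φ x := by
    intro x hx; simp only [hφ_def]; split <;> simp [hx]
  have hφc : ∀ x, 0 ≤ x → φ x ≤ c := by
    intro x hx; simp only [hφ_def]; split <;> [assumption; exact hc.le]
  have hψ0 : ∀ x, 0 ≤ x → 0 ≤ ψ x := by
    intro x hx; simp only [hψ_def]; split <;> simp [hx]
  have hψle : ∀ x, 0 ≤ x → ψ x ≤ x := by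
    intro x hx; simp only [hψ_def]; split <;> simp [hx]
  have hφψ : ∀ x, φ x + ψ x = x := by
    intro x; simp only [hφ_def, hψ_def]; split <;> ring
  -- identical distribution transfer
  have hid : ∀ (g : ℝ → ℝ), Measurable g → ∀ i,
      ∫ ω, g (Y i ω) ∂P = ∫ ω, g (Y 0 ω) ∂P := by
    intro g hg i
    rw [← integral_map (hmeas i).aemeasurable hg.aestronglyMeasurable, hident i,
      integral_map (hmeas 0).aemeasurable hg.aestronglyMeasurable]
  -- integrability of each Y i
  have hYint : ∀ i, Integrable (Y i) P := by
    intro i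
    have h0 : Integrable (id ∘ Y 0) P := hint
    have h1 : Integrable (id : ℝ → ℝ) (P.map (Y 0)) :=
      (integrable_map_measure aestronglyMeasurable_id (hmeas 0).aemeasurable).2 h0
    have h2 : Integrable (id : ℝ → ℝ) (P.map (Y i)) := by rw [hident i]; exact h1
    exact (integrable_map_measure aestronglyMeasurable_id (hmeas i).aemeasurable).1 h2
  -- the truncated variables are in L²
  have hXmem : ∀ i, MemLp (fun ω => φ (Y i ω)) 2 P := by
    intro i
    refine MemLp.of_bound ((hφm.comp (hmeas i)).aestronglyMeasurable) c
      (ae_of_all _ fun ω => ?_)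
    rw [Real.norm_eq_abs, abs_of_nonneg (hφ0 _ (hnn i ω))]
    exact hφc _ (hnn i ω)
  have hXint : ∀ i, Integrable (fun ω => φ (Y i ω)) P :=
    fun i => (hXmem i).integrable one_le_two
  have hψint : ∀ i, Integrable (fun ω => ψ (Y i ω)) P := by
    intro i
    have : (fun ω => ψ (Y i ω)) = fun ω => Y i ω - φ (Y i ω) := by
      funext ω; have := hφψ (Y i ω); linarith
    rw [this]; exact (hYint i).sub (hXint i)
  set p : ℝ := ∫ ω, ψ (Y 0 ω) ∂P with hp_def
  have hp0 : 0 ≤ p := integral_nonneg fun ω => hψ0 _ (hnn 0 ω)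
  have hp1 : p ≤ 1 := by
    rw [hp_def, ← hmean]
    exact integral_mono (hψint 0) hint fun ω => hψle _ (hnn 0 ω)
  have hφint0 : ∫ ω, φ (Y 0 ω) ∂P = 1 - p := by
    have : ∫ ω, (φ (Y 0 ω) + ψ (Y 0 ω)) ∂P = 1 := by
      simp only [hφψ]; exact hmean
    rw [integral_add (hXint 0) (hψint 0)] at this
    linarith
  -- the set integral equals p
  have hset : ∫ ω in {ω | L + t / 2 < Real.log (Y 0 ω)}, Y 0 ω ∂P = p := by
    have hS : MeasurableSet {ω | L + t / 2 < Real.log (Y 0 ω)} :=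
      measurableSet_lt measurable_const (Real.measurable_log.comp (hmeas 0))
    rw [← integral_indicator hS, hp_def]
    refine integral_congr_ae (ae_of_all _ fun ω => ?_)
    rcases eq_or_lt_of_le (hnn 0 ω) with h0 | h0
    · have hy : Y 0 ω = 0 := h0.symm
      simp [Set.indicator, hψ_def, hy, hc.le]
    · have hiff : L + t / 2 < Real.log (Y 0 ω) ↔ ¬ Y 0 ω ≤ c := by
        rw [not_le, hc_def, Real.lt_log_iff_exp_lt h0]
      by_cases hmem : L + t / 2 < Real.log (Y 0 ω)
      · simp [Set.indicator, hmem, hψ_def, hiff.1 hmem]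
      · have : Y 0 ω ≤ c := not_not.1 fun h => hmem (hiff.2 h)
        simp [Set.indicator, hmem, hψ_def, this]
  -- notation for the sums
  set Z : Ω → ℝ := fun ω => (N : ℝ)⁻¹ * ∑ i ∈ Finset.range N, Y i ω with hZ_def
  set Z' : Ω → ℝ := fun ω => (N : ℝ)⁻¹ * ∑ i ∈ Finset.range N, φ (Y i ω) with hZ'_def
  have hNpos : (0 : ℝ) < N := Nat.cast_pos.2 hN
  have hZint : Integrable Z P :=
    (integrable_finset_sum _ fun i _ => hYint i).const_mul _
  have hsum_fn : (fun ω => ∑ i ∈ Finset.range N, φ (Y i ω))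
      = ∑ i ∈ Finset.range N, (fun ω => φ (Y i ω)) := by
    funext ω; simp
  have hZ'mem : MemLp Z' 2 P := by
    have : MemLp (fun ω => ∑ i ∈ Finset.range N, φ (Y i ω)) 2 P := by
      rw [hsum_fn]; exact memLp_finset_sum' _ fun i _ => hXmem i
    exact this.const_mul _
  have hZ'int : Integrable Z' P := hZ'mem.integrable one_le_two
  -- expectation of Z'
  have hEZ' : ∫ ω, Z' ω ∂P = 1 - p := by
    rw [hZ'_def]
    rw [integral_const_mul, integral_finset_sum _ fun i _ => hXint i]
    have : ∀ i ∈ Finset.range N, ∫ ω, φ (Y i ω) ∂P = 1 - p := by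
      intro i _; rw [hid φ hφm i, hφint0]
    rw [Finset.sum_congr rfl this, Finset.sum_const, Finset.card_range, nsmul_eq_mul]
    field_simp
  -- expectation of Z - Z'
  have hEdiff : ∫ ω, (Z ω - Z' ω) ∂P = p := by
    have hZZ' : ∀ ω, Z ω - Z' ω = (N : ℝ)⁻¹ * ∑ i ∈ Finset.range N, ψ (Y i ω) := by
      intro ω
      rw [hZ_def, hZ'_def]
      simp only [← mul_sub, ← Finset.sum_sub_distrib]
      congr 1; refine Finset.sum_congr rfl fun i _ => ?_
      have := hφψ (Y i ω); linarith
    simp only [hZZ']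
    rw [integral_const_mul, integral_finset_sum _ fun i _ => hψint i]
    have : ∀ i ∈ Finset.range N, ∫ ω, ψ (Y i ω) ∂P = p := by
      intro i _; rw [hid ψ hψm i]
    rw [Finset.sum_congr rfl this, Finset.sum_const, Finset.card_range, nsmul_eq_mul]
    field_simp
  have hdiff_nonneg : ∀ ω, 0 ≤ Z ω - Z' ω := by
    intro ω
    have : Z ω - Z' ω = (N : ℝ)⁻¹ * ∑ i ∈ Finset.range N, ψ (Y i ω) := by
      rw [hZ_def, hZ'_def]
      simp only [← mul_sub, ← Finset.sum_sub_distrib]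
      congr 1; refine Finset.sum_congr rfl fun i _ => ?_
      have := hφψ (Y i ω); linarith
    rw [this]
    exact mul_nonneg (by positivity)
      (Finset.sum_nonneg fun i _ => hψ0 _ (hnn i ω))
  -- variance bound
  have hvar0 : ProbabilityTheory.variance (fun ω => φ (Y 0 ω)) P ≤ c := by
    have h1 : ProbabilityTheory.variance (fun ω => φ (Y 0 ω)) P
        ≤ ∫ ω, (φ (Y 0 ω)) ^ 2 ∂P := by
      have := ProbabilityTheory.variance_le_expectation_sq
        (μ := P) (X := fun ω => φ (Y 0 ω)) ((hφm.comp (hmeas 0)).aestronglyMeasurable)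
      simpa using this
    have h2 : ∫ ω, (φ (Y 0 ω)) ^ 2 ∂P ≤ ∫ ω, c * φ (Y 0 ω) ∂P := by
      refine integral_mono ?_ ((hXint 0).const_mul c) fun ω => ?_
      · exact ((hXmem 0).integrable_sq).congr (ae_of_all _ fun ω => by simp [pow_two])
      · have h01 : 0 ≤ φ (Y 0 ω) := hφ0 _ (hnn 0 ω)
        have h02 : φ (Y 0 ω) ≤ c := hφc _ (hnn 0 ω)
        nlinarith
    have h3 : ∫ ω, c * φ (Y 0 ω) ∂P = c * (1 - p) := by
      rw [integral_const_mul, hφint0]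
    nlinarith
  have hvar_eq : ∀ i, ProbabilityTheory.variance (fun ω => φ (Y i ω)) P
      = ProbabilityTheory.variance (fun ω => φ (Y 0 ω)) P := by
    intro i
    rw [ProbabilityTheory.variance_eq_sub (hXmem i),
      ProbabilityTheory.variance_eq_sub (hXmem 0)]
    have e1 : ∫ ω, ((fun ω => φ (Y i ω)) ^ 2) ω ∂P = ∫ ω, ((fun ω => φ (Y 0 ω)) ^ 2) ω ∂P := by
      simp only [Pi.pow_apply]
      exact hid (fun x => (φ x) ^ 2) (hφm.pow_const 2) i
    have e2 : ∫ ω, φ (Y i ω) ∂P = ∫ ω, φ (Y 0 ω) ∂P := hid φ hφm i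
    rw [e1, e2]
  have hvarZ' : ProbabilityTheory.variance Z' P ≤ c / N := by
    have hsum : ProbabilityTheory.variance
        (fun ω => ∑ i ∈ Finset.range N, φ (Y i ω)) P
        = ∑ i ∈ Finset.range N, ProbabilityTheory.variance (fun ω => φ (Y i ω)) P := by
      have hpair : Set.Pairwise ↑(Finset.range N)
          (fun i j => ProbabilityTheory.IndepFun (fun ω => φ (Y i ω)) (fun ω => φ (Y j ω)) P) := by
        intro i _ j _ hij
        exact (hindep.indepFun hij).comp hφm hφm
      have := ProbabilityTheory.IndepFun.variance_sum (μ := P)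
        (X := fun i => fun ω => φ (Y i ω)) (s := Finset.range N)
        (fun i _ => hXmem i) hpair
      rw [hsum_fn]
      exact this
    have : ProbabilityTheory.variance Z' P
        = (N : ℝ)⁻¹ ^ 2 * ProbabilityTheory.variance
            (fun ω => ∑ i ∈ Finset.range N, φ (Y i ω)) P := by
      rw [hZ'_def]
      exact ProbabilityTheory.variance_const_mul _ _ _
    rw [this, hsum, Finset.sum_congr rfl fun i _ => hvar_eq i, Finset.sum_const,
      Finset.card_range, nsmul_eq_mul]
    have hv0 : 0 ≤ ProbabilityTheory.variance (fun ω => φ (Y 0 ω)) P :=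
      ProbabilityTheory.variance_nonneg _ _
    rw [div_eq_mul_inv]
    calc (N : ℝ)⁻¹ ^ 2 * ((N : ℝ) * ProbabilityTheory.variance (fun ω => φ (Y 0 ω)) P)
        = ProbabilityTheory.variance (fun ω => φ (Y 0 ω)) P * (N : ℝ)⁻¹ := by
          field_simp
      _ ≤ c * (N : ℝ)⁻¹ := by
          exact mul_le_mul_of_nonneg_right hvar0 (by positivity)
  -- L¹ bound on |Z' - E Z'| via Cauchy-Schwarz
  set W : Ω → ℝ := fun ω => Z' ω - (1 - p) with hW_def
  have hWmem : MemLp W 2 P := hZ'mem.sub (memLp_const _)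
  have hWint : Integrable W P := hWmem.integrable one_le_two
  have habsW : Integrable (fun ω => |W ω|) P := hWint.abs
  have hEW2 : ∫ ω, (W ω) ^ 2 ∂P = ProbabilityTheory.variance Z' P := by
    have := ProbabilityTheory.variance_eq_integral hZ'mem.aestronglyMeasurable.aemeasurable
    rw [this, hEZ']
  have hCS : ∫ ω, |W ω| ∂P ≤ Real.sqrt (ProbabilityTheory.variance Z' P) := by
    have habs2 : MemLp (fun ω => |W ω|) 2 P := by
      have := hWmem.norm
      simpa [Real.norm_eq_abs] using this
    have hvd := ProbabilityTheory.variance_eq_sub habs2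
    have hnn' := ProbabilityTheory.variance_nonneg (fun ω => |W ω|) P
    rw [hvd] at hnn'
    have hsq : ∫ ω, ((fun ω => |W ω|) ^ 2) ω ∂P = ∫ ω, (W ω) ^ 2 ∂P := by
      refine integral_congr_ae (ae_of_all _ fun ω => ?_)
      simp [sq_abs]
    rw [hsq, hEW2] at hnn'
    have h1 : (∫ ω, |W ω| ∂P) ^ 2 ≤ ProbabilityTheory.variance Z' P := by linarith
    have h2 : 0 ≤ ∫ ω, |W ω| ∂P := integral_nonneg fun ω => abs_nonneg _
    exact (Real.le_sqrt h2 (ProbabilityTheory.variance_nonneg _ _)).2 h1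
  have hsqrt_var : Real.sqrt (ProbabilityTheory.variance Z' P) ≤ Real.exp (-t / 4) := by
    have h1 : Real.sqrt (ProbabilityTheory.variance Z' P) ≤ Real.sqrt (c / N) :=
      Real.sqrt_le_sqrt hvarZ'
    have h2 : c / N = Real.exp (-t / 2) := by
      rw [hc_def, ← Real.exp_log hNpos, ← Real.exp_sub]
      congr 1
      rw [ht_def]; ring
    have h3 : Real.sqrt (Real.exp (-t / 2)) = Real.exp (-t / 4) := by
      rw [show (-t / 2 : ℝ) = -t / 4 + -t / 4 by ring, Real.exp_add, ← pow_two,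
        Real.sqrt_sq (Real.exp_pos _).le]
    rw [h2, h3] at h1
    exact h1
  -- the L¹ bound on |Z - 1|
  have hZ1int : Integrable (fun ω => |Z ω - 1|) P := (hZint.sub (integrable_const 1)).abs
  have hmain : ∫ ω, |Z ω - 1| ∂P ≤ Real.exp (-t / 4) + 2 * p := by
    have hptw : ∀ ω, |Z ω - 1| ≤ |W ω| + (Z ω - Z' ω) + p := by
      intro ω
      have hdec : Z ω - 1 = W ω + (Z ω - Z' ω) + (-p) := by
        rw [hW_def]; ring
      calc |Z ω - 1| = |W ω + (Z ω - Z' ω) + (-p)| := by rw [hdec]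
        _ ≤ |W ω + (Z ω - Z' ω)| + |(-p)| := abs_add_le _ _
        _ ≤ |W ω| + |Z ω - Z' ω| + |(-p)| := by
            exact add_le_add_left (abs_add_le _ _) _
        _ = |W ω| + (Z ω - Z' ω) + p := by
            rw [abs_of_nonneg (hdiff_nonneg ω), abs_neg, abs_of_nonneg hp0]
    have hI1 : Integrable (fun ω => Z ω - Z' ω) P := hZint.sub hZ'int
    have hint2 : Integrable (fun ω => |W ω| + (Z ω - Z' ω) + p) P :=
      (habsW.add hI1).add (integrable_const p)
    calc ∫ ω, |Z ω - 1| ∂P ≤ ∫ ω, (|W ω| + (Z ω - Z' ω) + p) ∂P :=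
          integral_mono hZ1int hint2 hptw
      _ = (∫ ω, |W ω| ∂P) + (∫ ω, (Z ω - Z' ω) ∂P) + p := by
          have e1 : ∫ ω, (|W ω| + (Z ω - Z' ω) + p) ∂P
              = (∫ ω, (|W ω| + (Z ω - Z' ω)) ∂P) + ∫ _ω, p ∂P :=
            integral_add (habsW.add hI1) (integrable_const p)
          have e2 : ∫ ω, (|W ω| + (Z ω - Z' ω)) ∂P
              = (∫ ω, |W ω| ∂P) + ∫ ω, (Z ω - Z' ω) ∂P :=
            integral_add habsW hI1
          rw [e1, e2, integral_const]
          simp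
      _ ≤ Real.exp (-t / 4) + p + p := by
          have := hCS.trans hsqrt_var
          rw [hEdiff]
          linarith
      _ = Real.exp (-t / 4) + 2 * p := by ring
  -- Markov
  have hmarkov : δ * (P {ω | δ ≤ |Z ω - 1|}).toReal ≤ ∫ ω, |Z ω - 1| ∂P :=
    mul_meas_ge_le_integral_of_nonneg (ae_of_all _ fun ω => abs_nonneg _) hZ1int δ
  have hfinal : (P {ω | δ ≤ |Z ω - 1|}).toReal
      ≤ (1 / δ) * Real.exp (-t / 4) + (2 / δ) * p := by
    have h1 : (P {ω | δ ≤ |Z ω - 1|}).toReal ≤ δ⁻¹ * (Real.exp (-t / 4) + 2 * p) := by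
      calc (P {ω | δ ≤ |Z ω - 1|}).toReal
          = δ⁻¹ * (δ * (P {ω | δ ≤ |Z ω - 1|}).toReal) := by field_simp
        _ ≤ δ⁻¹ * (Real.exp (-t / 4) + 2 * p) := by
            exact mul_le_mul_of_nonneg_left (hmarkov.trans hmain) (by positivity)
    calc (P {ω | δ ≤ |Z ω - 1|}).toReal ≤ δ⁻¹ * (Real.exp (-t / 4) + 2 * p) := h1
      _ = (1 / δ) * Real.exp (-t / 4) + (2 / δ) * p := by field_simp; try ring
  have hpsqrt : p ≤ Real.sqrt p := by
    have : p = Real.sqrt (p ^ 2) := (Real.sqrt_sq hp0).symm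
    rw [this]
    exact Real.sqrt_le_sqrt (by nlinarith)
  rw [hset]
  calc (P {ω | δ ≤ |Z ω - 1|}).toReal
      ≤ (1 / δ) * Real.exp (-t / 4) + (2 / δ) * p := hfinal
    _ ≤ (1 / δ) * Real.exp (-t / 4) + (2 / δ) * Real.sqrt p := by
        have h2δ : (0:ℝ) ≤ 2 / δ := by positivity
        exact add_le_add_right (mul_le_mul_of_nonneg_left hpsqrt h2δ) _
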